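/- Let (β_k) and (δ_k) be real sequences with β_k ≥ 0, δ_k ≥ 0, δ_{k+1} ≤ δ_k, and β_{k+1}² ≤ (δ_k − δ_{k+1}) β_k for all k ∈ ℕ. Then the series Σ_{k=0}^∞ β_k converges (is finite). -/
import Mathlib


/-- If `β_k, δ_k ≥ 0`, `δ_{k+1} ≤ δ_k`, and `β_{k+1}² ≤ (δ_k - δ_{k+1})β_k`
for all `k`, then `Σ β_k < ∞`. -/
theorem stmt_17 (β δ : ℕ → ℝ) (hβ : ∀ k, 0 ≤ β k) (hδ : ∀ k, 0 ≤ δ k)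
    (hmono : ∀ k, δ (k + 1) ≤ δ k)
    (h : ∀ k, (β (k + 1)) ^ 2 ≤ (δ k - δ (k + 1)) * β k) :
    Summable β := by
  -- AM-GM step: 2 β (k+1) ≤ β k + δ k - δ (k+1)
  have key : ∀ k, 2 * β (k + 1) ≤ β k + δ k - δ (k + 1) := by
    intro k
    nlinarith [h k, hβ k, hβ (k + 1), hmono k, sq_nonneg (β k - (δ k - δ (k + 1)))]
  -- telescoping bound on partial sums
  have claim : ∀ n, 2 * (∑ i ∈ Finset.range (n + 1), β i) ≤
      2 * β 0 + (∑ i ∈ Finset.range n, β i) + δ 0 - δ n := by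
    intro n
    induction n with
    | zero => simp
    | succ n ih =>
      rw [Finset.sum_range_succ, Finset.sum_range_succ]
      rw [Finset.sum_range_succ] at ih
      have := key n
      linarith
  apply summable_of_sum_range_le (c := 2 * β 0 + δ 0) hβ
  intro n
  cases n with
  | zero => simp; linarith [hβ 0, hδ 0]
  | succ n =>
    have h1 := claim n
    have h2 : (∑ i ∈ Finset.range n, β i) ≤ ∑ i ∈ Finset.range (n + 1), β i := by
      rw [Finset.sum_range_succ]; linarith [hβ n]
    have := hδ n
    linarith
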